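/- Let (A, ≻, ≺) be a finite-dimensional anti-dendriform algebra and r ∈ A⊗A such that r + τ(r) is invariant. Then for all x ∈ A and ζ ∈ A*: L_≺(x)T_{r+τ(r)}(ζ) = T_{r+τ(r)}(R_≻*(x)ζ) and T_{r+τ(r)}(L_≺*(x)ζ) = R_≻(x)T_{r+τ(r)}(ζ). -/

import Mathlib

open TensorProduct

set_option synthInstance.maxHeartbeats 1000000
set_option maxHeartbeats 1600000

variable {K : Type*} [Field K]

/-- The anti-dendriform algebra identities for two bilinear operations `s` (≻) and `p` (≺):
`x≻(y≻z) = -(x·y)≻z = -x≺(y·z) = (x≺y)≺z` and `(x≻y)≺z = x≻(y≺z)`, where `x·y = x≻y + x≺y`. -/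
def IsAntiDend {M : Type*} [AddCommGroup M] [Module K M]
    (s p : M →ₗ[K] M →ₗ[K] M) : Prop :=
  ∀ x y z : M,
    s x (s y z) = - s (s x y + p x y) z ∧
    s x (s y z) = - p x (s y z + p y z) ∧
    s x (s y z) = p (p x y) z ∧
    p (s x y) z = s x (p y z)

/-- The bilinear map `a ⊗ b ↦ (ζ ↦ ζ(a) • b)` used to define `T_r`. -/
noncomputable def Tbil {M : Type*} [AddCommGroup M] [Module K M] :
    M →ₗ[K] M →ₗ[K] (Module.Dual K M →ₗ[K] M) :=
  LinearMap.mk₂ K (fun a b => (Module.Dual.eval K M a).smulRight b)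
    (fun a a' b => by ext ζ; simp [add_smul])
    (fun c a b => by
      ext ζ
      simp only [LinearMap.smulRight_apply, LinearMap.smul_apply, map_smul,
        Module.Dual.eval_apply, smul_eq_mul, mul_smul])
    (fun a b b' => by ext ζ; simp)
    (fun c a b => by
      ext ζ
      simp only [LinearMap.smulRight_apply, LinearMap.smul_apply]
      exact smul_comm _ _ _)

/-- `T_r : A* → A`, `⟨T_r ζ, η⟩ = ⟨r, ζ ⊗ η⟩`; concretely `T_r ζ = Σ ζ(aᵢ) • bᵢ`
for `r = Σ aᵢ ⊗ bᵢ`. -/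
noncomputable def TmL {M : Type*} [AddCommGroup M] [Module K M] (r : M ⊗[K] M) :
    Module.Dual K M →ₗ[K] M :=
  TensorProduct.lift Tbil r

/-- The flip `τ : A ⊗ A → A ⊗ A`. -/
noncomputable def tau {M : Type*} [AddCommGroup M] [Module K M] (r : M ⊗[K] M) : M ⊗[K] M :=
  TensorProduct.comm K M M r

/-- `r` is invariant: `(R_≺(x)⊗I + I⊗L_·(x)) r = 0` and `(R_·(x)⊗I + I⊗L_≻(x)) r = 0`. -/
def Invariant {M : Type*} [AddCommGroup M] [Module K M]
    (s p : M →ₗ[K] M →ₗ[K] M) (r : M ⊗[K] M) : Prop :=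
  ∀ x : M,
    TensorProduct.map (p.flip x) (LinearMap.id : M →ₗ[K] M) r
      + TensorProduct.map (LinearMap.id : M →ₗ[K] M) ((s + p) x) r = 0 ∧
    TensorProduct.map ((s + p).flip x) (LinearMap.id : M →ₗ[K] M) r
      + TensorProduct.map (LinearMap.id : M →ₗ[K] M) (s x) r = 0

variable {A : Type*} [AddCommGroup A] [Module K A]

lemma TmL_map_left {M : Type*} [AddCommGroup M] [Module K M]
    (f : M →ₗ[K] M) (r : M ⊗[K] M) (ζ : Module.Dual K M) :
    TmL (TensorProduct.map f LinearMap.id r) ζ = TmL r (f.dualMap ζ) := by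
  induction r using TensorProduct.induction_on with
  | zero => simp [TmL]
  | tmul a b => simp [TmL, Tbil]
  | add x y hx hy =>
      simp only [TmL] at hx hy ⊢
      simp [map_add, hx, hy]

lemma TmL_map_right {M : Type*} [AddCommGroup M] [Module K M]
    (g : M →ₗ[K] M) (r : M ⊗[K] M) (ζ : Module.Dual K M) :
    TmL (TensorProduct.map LinearMap.id g r) ζ = g (TmL r ζ) := by
  induction r using TensorProduct.induction_on with
  | zero => simp [TmL]
  | tmul a b => simp [TmL, Tbil]
  | add x y hx hy =>
      simp only [TmL] at hx hy ⊢
      simp [map_add, hx, hy]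

lemma tau_map {M : Type*} [AddCommGroup M] [Module K M]
    (f g : M →ₗ[K] M) (r : M ⊗[K] M) :
    tau (TensorProduct.map f g r) = TensorProduct.map g f (tau r) := by
  induction r using TensorProduct.induction_on with
  | zero => simp [tau]
  | tmul a b => simp [tau]
  | add x y hx hy => simp only [map_add, tau, hx, hy] at *; simp [tau, map_add, hx, hy]

lemma tau_tau {M : Type*} [AddCommGroup M] [Module K M] (r : M ⊗[K] M) :
    tau (tau r) = r := by
  induction r using TensorProduct.induction_on with
  | zero => simp [tau]
  | tmul a b => simp [tau]
  | add x y hx hy => simp [tau, map_add] at *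

/-- if `r + τ(r)` is invariant then
`L_≺(x)T_{r+τ(r)}(ζ) = T_{r+τ(r)}(R_≻*(x)ζ)` and
`T_{r+τ(r)}(L_≺*(x)ζ) = R_≻(x)T_{r+τ(r)}(ζ)`. -/
theorem stmt6 [FiniteDimensional K A]
    (s p : A →ₗ[K] A →ₗ[K] A) (h : IsAntiDend s p) (r : A ⊗[K] A)
    (hinv : Invariant s p (r + tau r)) :
    ∀ (x : A) (ζ : Module.Dual K A),
      p x (TmL (r + tau r) ζ) = TmL (r + tau r) ((s.flip x).dualMap ζ) ∧
      TmL (r + tau r) ((p x).dualMap ζ) = s.flip x (TmL (r + tau r) ζ) := by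
  intro x ζ
  set u := r + tau r with hu
  have hsym : tau u = u := by
    have htr : tau (r + tau r) = tau r + tau (tau r) := by simp only [tau, map_add]
    rw [hu, htr, tau_tau, add_comm]
  obtain ⟨h1, h2⟩ := hinv x
  have hflip : (s + p).flip x = s.flip x + p.flip x := rfl
  have happ : (s + p) x = s x + p x := rfl
  rw [hflip, TensorProduct.map_add_left, LinearMap.add_apply] at h2
  rw [happ, TensorProduct.map_add_right, LinearMap.add_apply] at h1
  have key : TensorProduct.map (s.flip x) (LinearMap.id : A →ₗ[K] A) u
      = TensorProduct.map (LinearMap.id : A →ₗ[K] A) (p x) u := by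
    have h3 : (TensorProduct.map (s.flip x) (LinearMap.id : A →ₗ[K] A) u
          + TensorProduct.map (p.flip x) (LinearMap.id : A →ₗ[K] A) u
          + TensorProduct.map (LinearMap.id : A →ₗ[K] A) (s x) u)
        - (TensorProduct.map (p.flip x) (LinearMap.id : A →ₗ[K] A) u
          + (TensorProduct.map (LinearMap.id : A →ₗ[K] A) (s x) u
            + TensorProduct.map (LinearMap.id : A →ₗ[K] A) (p x) u)) = 0 := by
      rw [h2, h1]; simp
    have h4 : TensorProduct.map (s.flip x) (LinearMap.id : A →ₗ[K] A) u
        - TensorProduct.map (LinearMap.id : A →ₗ[K] A) (p x) u = 0 := by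
      rw [← h3]; abel
    exact sub_eq_zero.mp h4
  have key2 : TensorProduct.map (p x) (LinearMap.id : A →ₗ[K] A) u
      = TensorProduct.map (LinearMap.id : A →ₗ[K] A) (s.flip x) u := by
    have h5 := congrArg tau key
    rw [tau_map, tau_map, hsym] at h5
    exact h5.symm
  constructor
  · rw [← TmL_map_left, key, TmL_map_right]
  · rw [← TmL_map_left, key2, TmL_map_right]
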